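/- Under the hypotheses that R maps Hom_H(a,b) to Hom_H(a−1,b+1), R* maps Hom_H(a,b) to Hom_H(a+1,b−1), and R*Rf = RR*f + (a−b)f on Hom_H(a,b), one has for all α, β ≥ 0 and f ∈ Hom_H(a,b): (R*)^α R^β f = Σ_{c=0}^{α} C(α,c)·(−β)_c·(b−a+β−α)_c · R^{β−c}(R*)^{α−c} f, where (x)_c is the rising factorial and terms with negative operator powers have zero coefficient. -/

import Mathlib

open Finset

/-- The rising factorial (Pochhammer symbol) `(x)_n = x(x+1)⋯(x+n−1)`. -/
def risingFac (x : ℤ) : ℕ → ℤ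
  | 0 => 1
  | n + 1 => risingFac x n * (x + n)

lemma risingFac_succ (x : ℤ) (n : ℕ) : risingFac x (n+1) = risingFac x n * (x + n) := rfl

lemma risingFac_succ' (x : ℤ) (n : ℕ) : risingFac x (n+1) = x * risingFac (x+1) n := by
  induction n with
  | zero => simp [risingFac]
  | succ n ih =>
    rw [risingFac_succ, ih, risingFac_succ]
    push_cast
    ring

lemma risingFac_zero_left (n : ℕ) : risingFac 0 (n+1) = 0 := by
  induction n with
  | zero => simp [risingFac]
  | succ n ih => rw [risingFac_succ, ih]; ring

lemma choose_id (α c : ℕ) :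
    (Nat.choose α (c+1) : ℤ) * (c+1) = (Nat.choose α c : ℤ) * ((α : ℤ) - c) := by
  rcases le_or_gt c α with h | h
  · have h2 : ((Nat.choose α (c+1) * (c+1) : ℕ) : ℤ) = ((Nat.choose α c * (α - c) : ℕ) : ℤ) := by
      exact_mod_cast congrArg (Nat.cast : ℕ → ℤ) (Nat.choose_succ_right_eq α c)
    push_cast [Nat.cast_sub h] at h2
    linarith
  · rw [Nat.choose_eq_zero_of_lt h, Nat.choose_eq_zero_of_lt (by omega)]
    simp

lemma coeff_id (α c : ℕ) (x d : ℤ) :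
    (Nat.choose (α+1) (c+1) : ℤ) * risingFac x (c+1) * risingFac d (c+1)
      = (Nat.choose α (c+1) : ℤ) * risingFac x (c+1) * risingFac (d-1) (c+1)
        + x * (d + α) * ((Nat.choose α c : ℤ) * risingFac (x+1) c * risingFac d c) := by
  have hp : (Nat.choose (α+1) (c+1) : ℤ) = Nat.choose α c + Nat.choose α (c+1) := by
    exact_mod_cast Nat.choose_succ_succ α c
  have h2 := choose_id α c
  have hb : (Nat.choose (α+1) (c+1) : ℤ) * (d + c)
      = (Nat.choose α (c+1) : ℤ) * (d - 1) + (d + α) * (Nat.choose α c : ℤ) := by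
    linear_combination hp * (d + c) + h2
  have e1 : risingFac x (c+1) = x * risingFac (x+1) c := risingFac_succ' x c
  have e2 : risingFac d (c+1) = risingFac d c * (d + c) := risingFac_succ d c
  have e3 : risingFac (d-1) (c+1) = (d-1) * risingFac d c := by
    have := risingFac_succ' (d-1) c
    rwa [sub_add_cancel] at this
  rw [e1, e2, e3]
  linear_combination hb * (x * risingFac (x+1) c * risingFac d c)

lemma comm_pow {M : Type*} [AddCommGroup M] [Module ℂ M]
    (Hom : ℤ → ℤ → Submodule ℂ M) (R Rs : Module.End ℂ M)
    (hR : ∀ (a b : ℤ), ∀ f ∈ Hom a b, R f ∈ Hom (a - 1) (b + 1))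
    (hcomm : ∀ (a b : ℤ), ∀ f ∈ Hom a b, Rs (R f) = R (Rs f) + ((a - b : ℤ) : ℂ) • f) :
    ∀ (k : ℕ) (a b : ℤ), ∀ f ∈ Hom a b,
      Rs ((R ^ (k+1)) f) = (R ^ (k+1)) (Rs f)
        + (((((k:ℤ)+1) * (a - b - k)) : ℤ) : ℂ) • (R ^ k) f := by
  intro k
  induction k with
  | zero =>
    intro a b f hf
    simpa using hcomm a b f hf
  | succ k ih =>
    intro a b f hf
    have h1 : ∀ g : M, (R ^ (k+2)) g = (R ^ (k+1)) (R g) := by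
      intro g; rw [pow_succ, Module.End.mul_apply]
    have h2 : ∀ g : M, (R ^ (k+1)) g = (R ^ k) (R g) := by
      intro g; rw [pow_succ, Module.End.mul_apply]
    rw [h1 f, ih (a-1) (b+1) (R f) (hR a b f hf), hcomm a b f hf, map_add, map_smul,
      ← h1 (Rs f), ← h2 f]
    rw [add_assoc, ← add_smul]
    congr 1
    push_cast
    ring_nf

/-- Abstract general commutation: under the same hypotheses as the iterated
commutation lemma, for all `α, β ≥ 0` and `f ∈ Hom(a,b)`:
`(R*)^α R^β f = Σ_{c=0}^{α} C(α,c)·(−β)_c·(b−a+β−α)_c · R^{β−c}(R*)^{α−c} f`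
(terms with negative operator powers have zero coefficient, since
`(−β)_c = 0` for `c > β`). -/
theorem general_commutation {M : Type*} [AddCommGroup M] [Module ℂ M]
    (Hom : ℤ → ℤ → Submodule ℂ M) (R Rs : Module.End ℂ M)
    (hR : ∀ (a b : ℤ), ∀ f ∈ Hom a b, R f ∈ Hom (a - 1) (b + 1))
    (hRs : ∀ (a b : ℤ), ∀ f ∈ Hom a b, Rs f ∈ Hom (a + 1) (b - 1))
    (hcomm : ∀ (a b : ℤ), ∀ f ∈ Hom a b, Rs (R f) = R (Rs f) + ((a - b : ℤ) : ℂ) • f) :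
    ∀ (α β : ℕ) (a b : ℤ), ∀ f ∈ Hom a b,
      (Rs ^ α) ((R ^ β) f) =
        ∑ c ∈ Finset.range (α + 1),
          (((α.choose c : ℤ) * risingFac (-(β : ℤ)) c *
              risingFac (b - a + β - α) c : ℤ) : ℂ) •
            ((R ^ (β - c)) ((Rs ^ (α - c)) f)) := by
  intro α
  induction α with
  | zero =>
    intro β a b f hf
    simp [risingFac]
  | succ α ih =>
    intro β a b f hf
    cases β with
    | zero =>
      rw [Finset.sum_range_succ']
      simp only [Nat.cast_zero, neg_zero, risingFac_zero_left, mul_zero, zero_mul,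
        Int.cast_zero, zero_smul, Finset.sum_const_zero, zero_add]
      simp [risingFac]
    | succ k =>
      have hf' : Rs f ∈ Hom (a+1) (b-1) := hRs a b f hf
      have hL : (Rs ^ (α+1)) ((R ^ (k+1)) f) = (Rs ^ α) (Rs ((R ^ (k+1)) f)) := by
        rw [pow_succ, Module.End.mul_apply]
      rw [hL, comm_pow Hom R Rs hR hcomm k a b f hf, map_add, map_smul,
        ih (k+1) (a+1) (b-1) (Rs f) hf', ih k a b f hf]
      push_cast
      rw [show b - 1 - (a + 1) + ((k:ℤ) + 1) - (α:ℤ) = b - a + (k:ℤ) - (α:ℤ) - 1 from by ring,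
        show b - a + ((k:ℤ) + 1) - ((α:ℤ) + 1) = b - a + (k:ℤ) - (α:ℤ) from by ring]
      have hv : ∀ c ∈ Finset.range (α+1),
          ((α.choose c : ℂ) * ((risingFac (-((k:ℤ)+1)) c : ℤ) : ℂ) *
              ((risingFac (b - a + (k:ℤ) - (α:ℤ) - 1) c : ℤ) : ℂ)) •
            ((R ^ (k+1 - c)) ((Rs ^ (α - c)) (Rs f)))
          = ((α.choose c : ℂ) * ((risingFac (-((k:ℤ)+1)) c : ℤ) : ℂ) *
              ((risingFac (b - a + (k:ℤ) - (α:ℤ) - 1) c : ℤ) : ℂ)) •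
            ((R ^ (k+1 - c)) ((Rs ^ (α + 1 - c)) f)) := by
        intro c hc
        rw [Finset.mem_range] at hc
        have h3 : α + 1 - c = (α - c) + 1 := by omega
        rw [h3, pow_succ, Module.End.mul_apply]
      rw [Finset.sum_congr rfl hv, Finset.sum_range_succ' _ (α+1), Finset.sum_range_succ' _ α,
        Finset.smul_sum]
      simp only [Nat.succ_sub_succ, smul_smul]
      have hext : ∑ c ∈ Finset.range α,
            ((α.choose (c+1) : ℂ) * ((risingFac (-((k:ℤ)+1)) (c+1) : ℤ) : ℂ) *
                ((risingFac (b - a + (k:ℤ) - (α:ℤ) - 1) (c+1) : ℤ) : ℂ)) •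
              ((R ^ (k - c)) ((Rs ^ (α - c)) f))
          = ∑ c ∈ Finset.range (α+1),
            ((α.choose (c+1) : ℂ) * ((risingFac (-((k:ℤ)+1)) (c+1) : ℤ) : ℂ) *
                ((risingFac (b - a + (k:ℤ) - (α:ℤ) - 1) (c+1) : ℤ) : ℂ)) •
              ((R ^ (k - c)) ((Rs ^ (α - c)) f)) := by
        rw [Finset.sum_range_succ, Nat.choose_succ_self]
        simp
      rw [hext, add_right_comm, ← Finset.sum_add_distrib]
      congr 1
      · refine Finset.sum_congr rfl ?_
        intro c hc
        rw [← add_smul]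
        congr 1
        have hz := coeff_id α c (-((k:ℤ)+1)) (b - a + (k:ℤ) - (α:ℤ))
        rw [show (-((k:ℤ)+1)+1) = -(k:ℤ) from by ring] at hz
        have hzc := congrArg (Int.cast : ℤ → ℂ) hz
        push_cast at hzc
        linear_combination -hzc
      · simp [risingFac]
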